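/- Let k be a perfect field and f ∈ k[x₁,...,x_n] irreducible over k. If f has a simple solution at some point P ∈ kⁿ (i.e., f ∈ I(P) \ I(P)²), then f is absolutely irreducible, i.e., irreducible over the algebraic closure of k. -/

import Mathlib

open MvPolynomial

/-- Descend a polynomial whose coefficients are in the range of a ring hom. -/
lemma aux_exists_map_eq {R S σ : Type*} [CommSemiring R] [CommSemiring S] (φ : R →+* S)
    (p : MvPolynomial σ S) (h : ∀ m, ∃ r, φ r = p.coeff m) :
    ∃ q : MvPolynomial σ R, map φ q = p := by
  choose c hc using h
  refine ⟨∑ m ∈ p.support, monomial m (c m), ?_⟩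
  rw [map_sum]
  simp_rw [map_monomial, hc]
  exact support_sum_monomial_coeff p

/-- Evaluation commutes with coefficient maps. -/
lemma aux_eval_map_comp {R S σ : Type*} [CommSemiring R] [CommSemiring S] (φ : R →+* S)
    (P : σ → R) (q : MvPolynomial σ R) :
    eval (fun i => φ (P i)) (map φ q) = φ (eval P q) := by
  rw [eval_map, ← eval₂_id (g := P) q, eval₂_comp_left φ (RingHom.id R) P q]
  rfl

lemma aux_eval_map_fix {S σ : Type*} [CommSemiring S] (e : S ≃+* S)
    (Q : σ → S) (hQ : ∀ i, e (Q i) = Q i) (q : MvPolynomial σ S) :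
    eval Q (map (e : S →+* S) q) = e (eval Q q) := by
  have h := eval₂_comp_left (e : S →+* S) (RingHom.id S) Q q
  simp only [eval₂_id, RingHom.comp_id] at h
  have hQ' : (⇑(e : S →+* S) ∘ Q) = Q := funext hQ
  rw [hQ'] at h
  rw [eval_map, ← h]
  rfl

lemma aux_mem_sq_derivs {F σ : Type*} [CommRing F] (Q : σ → F) {f : MvPolynomial σ F}
    (hf : f ∈ (RingHom.ker (eval Q)) ^ 2) :
    ∀ i, eval Q (pderiv i f) = 0 := by
  let J : Ideal (MvPolynomial σ F) :=
    { carrier := {p | eval Q p = 0 ∧ ∀ i, eval Q (pderiv i p) = 0}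
      add_mem' := fun ha hb => ⟨by simp [ha.1, hb.1], fun i => by simp [ha.2 i, hb.2 i]⟩
      zero_mem' := ⟨by simp, fun i => by simp⟩
      smul_mem' := fun c p hp => by
        refine ⟨by simp [smul_eq_mul, hp.1], fun i => ?_⟩
        rw [smul_eq_mul, pderiv_mul]
        simp [hp.1, hp.2 i] }
  have hle : (RingHom.ker (eval Q)) ^ 2 ≤ J := by
    rw [pow_two]
    refine Ideal.mul_le.2 fun a ha b hb => ?_
    have ha0 : eval Q a = 0 := RingHom.mem_ker.1 ha
    have hb0 : eval Q b = 0 := RingHom.mem_ker.1 hb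
    refine ⟨by simp [ha0], fun i => ?_⟩
    rw [pderiv_mul]
    simp [ha0, hb0]
  exact (hle hf).2

lemma aux_taylor {k σ : Type*} [CommRing k] [Fintype σ] [DecidableEq σ] (P : σ → k)
    (f : MvPolynomial σ k) :
    f - C (eval P f) - ∑ i : σ, C (eval P (pderiv i f)) * (X i - C (P i))
      ∈ (RingHom.ker (eval P : MvPolynomial σ k →+* k)) ^ 2 := by
  induction f using MvPolynomial.induction_on with
  | C a => simp
  | add p q hp hq =>
      have := add_mem hp hq
      convert this using 1
      simp only [map_add, C_add, add_mul, Finset.sum_add_distrib]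
      ring
  | mul_X p j hp =>
      set a := eval P p with ha
      have key : p * X j - C (eval P (p * X j)) -
          ∑ i : σ, C (eval P (pderiv i (p * X j))) * (X i - C (P i)) =
          (p - C a - ∑ i : σ, C (eval P (pderiv i p)) * (X i - C (P i))) * C (P j)
            + (p - C a) * (X j - C (P j)) := by
        have h1 : ∀ i : σ, eval P (pderiv i (p * X j)) =
            eval P (pderiv i p) * P j + a * (if i = j then 1 else 0) := by
          intro i
          rw [pderiv_mul]
          rcases eq_or_ne i j with rfl | hij
          · simp [ha]
          · simp [pderiv_X_of_ne (Ne.symm hij), hij]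
        simp only [h1]
        have h2 : ∀ i : σ, C (eval P (pderiv i p) * P j + a * (if i = j then 1 else 0))
            * (X i - C (P i)) =
            C (eval P (pderiv i p)) * (X i - C (P i)) * C (P j)
              + (if i = j then C a * (X i - C (P i)) else 0) := by
          intro i
          rcases eq_or_ne i j with rfl | hij
          · simp only [if_pos rfl, if_true, ite_true, C_add, C_mul, C_1, mul_one]
            ring
          · simp only [if_neg hij, if_false, ite_false, C_add, C_mul, C_0, mul_zero, add_zero]
            ring
        simp only [h2, Finset.sum_add_distrib, Finset.sum_ite_eq', Finset.mem_univ, if_true,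
          ← Finset.sum_mul, map_mul, eval_X]
        ring
      rw [key]
      refine add_mem (Ideal.mul_mem_right _ _ hp) ?_
      rw [pow_two]
      refine Ideal.mul_mem_mul ?_ ?_
      · simp [RingHom.mem_ker, ha]
      · simp [RingHom.mem_ker]

lemma aux_mem_sq_of_derivs {k σ : Type*} [CommRing k] [Fintype σ] [DecidableEq σ] (P : σ → k)
    {f : MvPolynomial σ k} (h0 : eval P f = 0) (h1 : ∀ i, eval P (pderiv i f) = 0) :
    f ∈ (RingHom.ker (eval P : MvPolynomial σ k →+* k)) ^ 2 := by
  have := aux_taylor P f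
  simpa [h0, h1] using this

set_option maxHeartbeats 1000000 in
/-- An irreducible polynomial over a perfect field having a simple solution
(`f ∈ I(P) \ I(P)²`) is absolutely irreducible. -/
theorem stmt_2 {k : Type*} [Field k] [PerfectField k] {n : ℕ}
    (f : MvPolynomial (Fin n) k) (hf : Irreducible f)
    (P : Fin n → k)
    (h0 : f ∈ RingHom.ker (eval P))
    (h2 : f ∉ (RingHom.ker (eval P)) ^ 2) :
    Irreducible (MvPolynomial.map (algebraMap k (AlgebraicClosure k)) f) := by
  classical
  by_contra hirr
  set K := AlgebraicClosure k with hKdef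
  have hfne : f ≠ 0 := hf.ne_zero
  have h0' : eval P f = 0 := RingHom.mem_ker.1 h0
  have hKinj : Function.Injective (algebraMap k K) := (algebraMap k K).injective
  have hfK_nu : ¬ IsUnit (MvPolynomial.map (algebraMap k K) f) := by
    intro hu
    have h1 := hu.map (eval fun i => algebraMap k K (P i))
    rw [aux_eval_map_comp, h0', map_zero] at h1
    exact not_isUnit_zero h1
  rw [irreducible_iff] at hirr
  push_neg at hirr
  obtain ⟨A, B, hAB, hA, hB⟩ := hirr hfK_nu
  -- a finite Galois extension containing the coefficients of `A` and `B`
  set S : Finset K := A.support.image A.coeff ∪ B.support.image B.coeff with hS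
  set L₀ := IntermediateField.adjoin k (S : Set K) with hL₀def
  haveI : FiniteDimensional k L₀ :=
    IntermediateField.finiteDimensional_adjoin fun x _ => Algebra.IsIntegral.isIntegral x
  set L := IntermediateField.normalClosure k L₀ K with hLdef
  haveI : IsGalois k L := ⟨⟩
  have hSL : (S : Set K) ⊆ (L : Set K) := fun x hx =>
    IntermediateField.le_normalClosure L₀ (IntermediateField.subset_adjoin k _ hx)
  have hcoeffA : ∀ m, ∃ r : L, algebraMap L K r = A.coeff m := by
    intro m
    by_cases hm : m ∈ A.support
    · refine ⟨⟨A.coeff m, hSL ?_⟩, rfl⟩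
      simp only [hS, Finset.coe_union, Set.mem_union, Finset.coe_image, Set.mem_image]
      exact Or.inl ⟨m, by simpa using hm, rfl⟩
    · exact ⟨0, by simp [MvPolynomial.notMem_support_iff.1 hm]⟩
  have hcoeffB : ∀ m, ∃ r : L, algebraMap L K r = B.coeff m := by
    intro m
    by_cases hm : m ∈ B.support
    · refine ⟨⟨B.coeff m, hSL ?_⟩, rfl⟩
      simp only [hS, Finset.coe_union, Set.mem_union, Finset.coe_image, Set.mem_image]
      exact Or.inr ⟨m, by simpa using hm, rfl⟩
    · exact ⟨0, by simp [MvPolynomial.notMem_support_iff.1 hm]⟩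
  obtain ⟨A', hA'⟩ := aux_exists_map_eq (algebraMap L K) A hcoeffA
  obtain ⟨B', hB'⟩ := aux_exists_map_eq (algebraMap L K) B hcoeffB
  have hLKinj : Function.Injective (algebraMap L K) := (algebraMap (↥L) K).injective
  have htower : (algebraMap (↥L) K).comp (algebraMap k (↥L)) = algebraMap k K :=
    (IsScalarTower.algebraMap_eq k (↥L) K).symm
  set fL := MvPolynomial.map (algebraMap k (↥L)) f with hfLdef
  have hfLK : MvPolynomial.map (algebraMap (↥L) K) fL = MvPolynomial.map (algebraMap k K) f := by
    rw [hfLdef, map_map, htower]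
  have hfactor : fL = A' * B' := by
    apply MvPolynomial.map_injective _ hLKinj
    rw [map_mul, hA', hB', hfLK, hAB]
  have hA'nu : ¬ IsUnit A' := fun h => hA (hA' ▸ h.map (MvPolynomial.map (algebraMap (↥L) K)))
  have hB'nu : ¬ IsUnit B' := fun h => hB (hB' ▸ h.map (MvPolynomial.map (algebraMap (↥L) K)))
  have hfL_ne : fL ≠ 0 := by
    intro h
    exact hfne (MvPolynomial.map_injective _ (algebraMap k (↥L)).injective (by simpa using h))
  have hA'ne : A' ≠ 0 := by
    rintro rfl; rw [zero_mul] at hfactor; exact hfL_ne hfactor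
  have hB'ne : B' ≠ 0 := by
    rintro rfl; rw [mul_zero] at hfactor; exact hfL_ne hfactor
  set Q : Fin n → (↥L) := fun i => algebraMap k (↥L) (P i) with hQdef
  have hfLQ : eval Q fL = 0 := by
    rw [hfLdef, hQdef, aux_eval_map_comp, h0', map_zero]
  -- an irreducible factor of `fL` vanishing at `Q`
  obtain ⟨ms, hms, hassoc⟩ := UniqueFactorizationMonoid.exists_prime_factors fL hfL_ne
  obtain ⟨u, hu⟩ := hassoc
  have hevalprod : (ms.map (eval Q)).prod * eval Q (u : MvPolynomial (Fin n) (↥L)) = 0 := by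
    rw [← map_multiset_prod, ← map_mul, hu, hfLQ]
  have hune : eval Q (u : MvPolynomial (Fin n) (↥L)) ≠ 0 :=
    (u.isUnit.map (eval Q)).ne_zero
  have hprod0 : (ms.map (eval Q)).prod = 0 := by
    rcases mul_eq_zero.1 hevalprod with h | h
    · exact h
    · exact absurd h hune
  obtain ⟨h₁, h₁mem, h₁Q⟩ := Multiset.mem_map.1 (Multiset.prod_eq_zero_iff.1 hprod0)
  have h₁prime : Prime h₁ := hms h₁ h₁mem
  have h₁irr : Irreducible h₁ := h₁prime.irreducible
  have h₁dvd : h₁ ∣ fL := (Multiset.dvd_prod h₁mem).trans ⟨u, hu.symm⟩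
  -- the Galois conjugates of h₁
  haveI : Fintype ((↥L) ≃ₐ[k] (↥L)) := AlgEquiv.fintype k (↥L)
  let act : ((↥L) ≃ₐ[k] (↥L)) → MvPolynomial (Fin n) (↥L) →+* MvPolynomial (Fin n) (↥L) :=
    fun σ => MvPolynomial.map ((σ : (↥L) ≃+* (↥L)) : (↥L) →+* (↥L))
  have hactQ : ∀ (σ : (↥L) ≃ₐ[k] (↥L)) (p : MvPolynomial (Fin n) (↥L)),
      eval Q (act σ p) = σ (eval Q p) := by
    intro σ p
    exact aux_eval_map_fix (σ : (↥L) ≃+* (↥L)) Q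
      (fun i => by rw [hQdef]; exact σ.commutes (P i)) p
  have hactfix : ∀ (σ : (↥L) ≃ₐ[k] (↥L)) (q : MvPolynomial (Fin n) k),
      act σ (MvPolynomial.map (algebraMap k (↥L)) q) = MvPolynomial.map (algebraMap k (↥L)) q := by
    intro σ q
    show MvPolynomial.map _ (MvPolynomial.map _ q) = _
    rw [map_map]
    exact congrArg (fun (φ : k →+* (↥L)) => MvPolynomial.map φ q)
      (RingHom.ext fun x => σ.commutes x)
  have hactinj : ∀ σ : (↥L) ≃ₐ[k] (↥L), Function.Injective (act σ) := by
    intro σ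
    exact MvPolynomial.map_injective _ (σ : (↥L) ≃+* (↥L)).injective
  set N : MvPolynomial (Fin n) (↥L) := ∏ σ : ((↥L) ≃ₐ[k] (↥L)), act σ h₁ with hNdef
  have hactfL : ∀ σ : ((↥L) ≃ₐ[k] (↥L)), act σ fL = fL := fun σ => by rw [hfLdef]; exact hactfix σ f
  have hNdvd : N ∣ fL ^ (Fintype.card ((↥L) ≃ₐ[k] (↥L))) := by
    have hdvd : ∀ σ : ((↥L) ≃ₐ[k] (↥L)), act σ h₁ ∣ fL := by
      intro σ
      have := map_dvd (act σ) h₁dvd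
      rwa [hactfL σ] at this
    calc N ∣ ∏ _σ : ((↥L) ≃ₐ[k] (↥L)), fL := Finset.prod_dvd_prod_of_dvd _ _ fun σ _ => hdvd σ
    _ = fL ^ (Fintype.card ((↥L) ≃ₐ[k] (↥L))) := by rw [Finset.prod_const, Finset.card_univ]
  have hNfix : ∀ τ : ((↥L) ≃ₐ[k] (↥L)), act τ N = N := by
    intro τ
    rw [hNdef, map_prod]
    have hcomp : ∀ σ : ((↥L) ≃ₐ[k] (↥L)), act τ (act σ h₁) = act (τ * σ) h₁ := by
      intro σ
      show MvPolynomial.map ((τ : (↥L) ≃+* (↥L)) : (↥L) →+* (↥L))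
          (MvPolynomial.map ((σ : (↥L) ≃+* (↥L)) : (↥L) →+* (↥L)) h₁)
        = MvPolynomial.map (((τ * σ : (↥L) ≃ₐ[k] (↥L)) : (↥L) ≃+* (↥L)) : (↥L) →+* (↥L)) h₁
      rw [map_map]
      exact congrArg (fun (φ : (↥L) →+* (↥L)) => MvPolynomial.map φ h₁)
        (RingHom.ext fun x => rfl)
    calc (∏ σ : ((↥L) ≃ₐ[k] (↥L)), act τ (act σ h₁)) = ∏ σ : ((↥L) ≃ₐ[k] (↥L)), act (τ * σ) h₁ := by
          exact Finset.prod_congr rfl fun σ _ => hcomp σ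
    _ = ∏ σ : ((↥L) ≃ₐ[k] (↥L)), act σ h₁ := Equiv.prod_comp (Equiv.mulLeft τ) (fun σ => act σ h₁)
  -- descend Galois-invariant polynomials to k
  have descend : ∀ p : MvPolynomial (Fin n) (↥L), (∀ τ : ((↥L) ≃ₐ[k] (↥L)), act τ p = p) →
      ∃ q : MvPolynomial (Fin n) k, MvPolynomial.map (algebraMap k (↥L)) q = p := by
    intro p hp
    apply aux_exists_map_eq
    intro m
    have hfix : ∀ τ : ((↥L) ≃ₐ[k] (↥L)), τ (p.coeff m) = p.coeff m := by
      intro τ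
      have h3 := congrArg (coeff m) (hp τ)
      rw [show act τ p = MvPolynomial.map ((τ : (↥L) ≃+* (↥L)) : (↥L) →+* (↥L)) p from rfl,
        coeff_map] at h3
      exact h3
    have hmem : p.coeff m ∈ IntermediateField.fixedField
        (IntermediateField.fixingSubgroup (⊥ : IntermediateField k (↥L))) := by
      intro g
      exact hfix g.1
    rw [IsGalois.fixedField_fixingSubgroup] at hmem
    exact IntermediateField.mem_bot.1 hmem
  have hNne : N ≠ 0 := by
    rw [hNdef]
    refine Finset.prod_ne_zero_iff.2 fun σ _ => ?_
    intro h
    exact h₁irr.ne_zero (hactinj σ (by simpa using h))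
  obtain ⟨N₀, hN₀⟩ := descend N hNfix
  obtain ⟨u₂, hu₂⟩ := hNdvd
  have hu₂fix : ∀ τ : ((↥L) ≃ₐ[k] (↥L)), act τ u₂ = u₂ := by
    intro τ
    have h4 := congrArg (act τ) hu₂
    rw [map_mul, map_pow, hactfL τ, hNfix τ, hu₂] at h4
    exact (mul_left_cancel₀ hNne h4.symm)
  obtain ⟨u₀, hu₀⟩ := descend u₂ hu₂fix
  have hdvd_k : N₀ ∣ f ^ (Fintype.card ((↥L) ≃ₐ[k] (↥L))) := by
    refine ⟨u₀, ?_⟩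
    apply MvPolynomial.map_injective (algebraMap k (↥L)) (algebraMap k (↥L)).injective
    calc MvPolynomial.map (algebraMap k (↥L)) (f ^ (Fintype.card ((↥L) ≃ₐ[k] (↥L))))
        = fL ^ (Fintype.card ((↥L) ≃ₐ[k] (↥L))) := by rw [map_pow, hfLdef]
      _ = N * u₂ := hu₂
      _ = MvPolynomial.map (algebraMap k (↥L)) (N₀ * u₀) := by rw [map_mul, hN₀, hu₀]
  have hfprime : Prime f := UniqueFactorizationMonoid.irreducible_iff_prime.1 hf
  obtain ⟨i, _, hassoc₀⟩ := (dvd_prime_pow hfprime _).1 hdvd_k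
  have h₁dvdN : h₁ ∣ N := by
    have hone : act (1 : ((↥L) ≃ₐ[k] (↥L))) h₁ = h₁ := by
      show MvPolynomial.map _ h₁ = h₁
      have : (((1 : ((↥L) ≃ₐ[k] (↥L))) : (↥L) ≃+* (↥L)) : (↥L) →+* (↥L)) = RingHom.id (↥L) :=
        RingHom.ext fun x => rfl
      rw [this, map_id]
    exact hone ▸ Finset.dvd_prod_of_mem _ (Finset.mem_univ (1 : ((↥L) ≃ₐ[k] (↥L))))
  have hipos : i ≠ 0 := by
    rintro rfl
    rw [pow_zero] at hassoc₀
    have hN₀u : IsUnit N₀ := associated_one_iff_isUnit.1 hassoc₀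
    have hNu : IsUnit N := hN₀ ▸ hN₀u.map (MvPolynomial.map (algebraMap k (↥L)))
    exact h₁irr.not_isUnit (isUnit_of_dvd_unit h₁dvdN hNu)
  have hfdvdN₀ : f ∣ N₀ := (dvd_pow_self f hipos).trans hassoc₀.symm.dvd
  have hfLdvdN : fL ∣ N := by
    obtain ⟨w, hw⟩ := hfdvdN₀
    exact ⟨MvPolynomial.map (algebraMap k (↥L)) w, by rw [← hN₀, hw, map_mul, hfLdef]⟩
  -- every irreducible factor of fL vanishes at Q
  have hall : ∀ g : MvPolynomial (Fin n) (↥L), Irreducible g → g ∣ fL → eval Q g = 0 := by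
    intro g hgirr hgdvd
    have hgprime : Prime g := UniqueFactorizationMonoid.irreducible_iff_prime.1 hgirr
    have hgN : g ∣ N := hgdvd.trans hfLdvdN
    rw [hNdef] at hgN
    obtain ⟨σ, _, hσ⟩ := (Prime.dvd_finset_prod_iff hgprime _).1 hgN
    have hσirr : Irreducible (act σ h₁) := by
      have := h₁irr.map (mapEquiv (Fin n) ((σ : (↥L) ≃+* (↥L))))
      exact this
    have hass : Associated (act σ h₁) g := (hgirr.associated_of_dvd hσirr hσ).symm
    obtain ⟨v, hv⟩ := hass
    have hσ0 : eval Q (act σ h₁) = 0 := by rw [hactQ, h₁Q, map_zero]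
    rw [← hv, map_mul, hσ0, zero_mul]
  obtain ⟨gA, hgAirr, hgAdvd⟩ := WfDvdMonoid.exists_irreducible_factor hA'nu hA'ne
  obtain ⟨gB, hgBirr, hgBdvd⟩ := WfDvdMonoid.exists_irreducible_factor hB'nu hB'ne
  have hA'Q : eval Q A' = 0 := by
    obtain ⟨r, hr⟩ := hgAdvd
    have h5 := hall gA hgAirr (Dvd.dvd.trans ⟨r, hr⟩ ⟨B', hfactor⟩)
    rw [hr, map_mul, h5, zero_mul]
  have hB'Q : eval Q B' = 0 := by
    obtain ⟨r, hr⟩ := hgBdvd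
    have h5 := hall gB hgBirr (Dvd.dvd.trans ⟨r, hr⟩ ⟨A', by rw [hfactor, mul_comm]⟩)
    rw [hr, map_mul, h5, zero_mul]
  have hfLsq : fL ∈ (RingHom.ker (eval Q)) ^ 2 := by
    rw [pow_two, hfactor]
    exact Ideal.mul_mem_mul (RingHom.mem_ker.2 hA'Q) (RingHom.mem_ker.2 hB'Q)
  have hder := aux_mem_sq_derivs Q hfLsq
  have hderk : ∀ i, eval P (pderiv i f) = 0 := by
    intro j
    have h6 := hder j
    rw [hfLdef, pderiv_map, hQdef, aux_eval_map_comp] at h6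
    exact (algebraMap k (↥L)).injective (by rw [h6, map_zero])
  exact h2 (aux_mem_sq_of_derivs P h0' hderk)
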